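/- Let R be a commutative ring with identity and G a group. The group ring RG is left duo if and only if it is right duo. -/

import Mathlib

def IsRightDuo (S : Type*) [Ring S] : Prop :=
  ∀ I : AddSubgroup S, (∀ a ∈ I, ∀ r : S, a * r ∈ I) → (∀ a ∈ I, ∀ r : S, r * a ∈ I)

def IsLeftDuo (S : Type*) [Ring S] : Prop :=
  ∀ I : AddSubgroup S, (∀ a ∈ I, ∀ r : S, r * a ∈ I) → (∀ a ∈ I, ∀ r : S, a * r ∈ I)

noncomputable def invol (R G : Type*) [CommRing R] [Group G] :
    MonoidAlgebra R G →+ MonoidAlgebra R G :=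
  { toFun := MonoidAlgebra.mapDomain (·⁻¹)
    map_zero' := MonoidAlgebra.mapDomain_zero _
    map_add' := MonoidAlgebra.mapDomain_add _ }

lemma invol_apply (R G : Type*) [CommRing R] [Group G] (f : MonoidAlgebra R G) :
    invol R G f = MonoidAlgebra.mapDomain (·⁻¹) f := rfl

lemma invol_invol (R G : Type*) [CommRing R] [Group G] (f : MonoidAlgebra R G) :
    invol R G (invol R G f) = f := by
  rw [invol_apply, invol_apply]
  ext
  simp [← Finsupp.mapDomain_comp, Function.comp_def]

lemma invol_mul (R G : Type*) [CommRing R] [Group G] (f g : MonoidAlgebra R G) :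
    invol R G (f * g) = invol R G g * invol R G f := by
  induction f using MonoidAlgebra.induction_linear with
  | zero => simp
  | add a b ha hb => simp [add_mul, mul_add, ha, hb]
  | single a r =>
    induction g using MonoidAlgebra.induction_linear with
    | zero => simp
    | add c d hc hd => simp [add_mul, mul_add, hc, hd]
    | single b s =>
      rw [MonoidAlgebra.single_mul_single, invol_apply, invol_apply, invol_apply, MonoidAlgebra.mapDomain_single,
        MonoidAlgebra.mapDomain_single, MonoidAlgebra.mapDomain_single,
        MonoidAlgebra.single_mul_single, mul_inv_rev, mul_comm s r]

lemma duo_aux (R G : Type*) [CommRing R] [Group G]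
    (h : IsLeftDuo (MonoidAlgebra R G)) : IsRightDuo (MonoidAlgebra R G) := by
  intro I hI a ha r
  set σ := invol R G
  set J := I.map σ with hJ
  have hJmem : ∀ x, σ x ∈ J ↔ x ∈ I := by
    intro x
    constructor
    · rintro ⟨y, hy, hxy⟩
      have : y = x := by
        have := congrArg σ hxy
        rwa [invol_invol, invol_invol] at this
      rwa [← this]
    · intro hx; exact ⟨x, hx, rfl⟩
  have hJleft : ∀ b ∈ J, ∀ s : MonoidAlgebra R G, s * b ∈ J := by
    rintro b ⟨y, hy, rfl⟩ s
    have : s * σ y = σ (y * σ s) := by rw [invol_mul, invol_invol]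
    rw [this, hJmem]
    exact hI y hy (σ s)
  have hJright := h J hJleft
  have : σ a ∈ J := (hJmem a).2 ha
  have h2 : σ a * σ r ∈ J := hJright (σ a) this (σ r)
  have : σ a * σ r = σ (r * a) := (invol_mul R G r a).symm
  rw [this, hJmem] at h2
  exact h2

theorem stmt_7 (R G : Type*) [CommRing R] [Group G] :
    IsLeftDuo (MonoidAlgebra R G) ↔ IsRightDuo (MonoidAlgebra R G) := by
  constructor
  · exact duo_aux R G
  · intro h I hI a ha r
    -- mirror argument via involution
    set σ := invol R G
    set J := I.map σ with hJ
    have hJmem : ∀ x, σ x ∈ J ↔ x ∈ I := by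
      intro x
      constructor
      · rintro ⟨y, hy, hxy⟩
        have : y = x := by
          have := congrArg σ hxy
          rwa [invol_invol, invol_invol] at this
        rwa [← this]
      · intro hx; exact ⟨x, hx, rfl⟩
    have hJright : ∀ b ∈ J, ∀ s : MonoidAlgebra R G, b * s ∈ J := by
      rintro b ⟨y, hy, rfl⟩ s
      have : σ y * s = σ (σ s * y) := by rw [invol_mul, invol_invol]
      rw [this, hJmem]
      exact hI y hy (σ s)
    have hJleft := h J hJright
    have : σ a ∈ J := (hJmem a).2 ha
    have h2 : σ r * σ a ∈ J := hJleft (σ a) this (σ r)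
    have : σ r * σ a = σ (a * r) := (invol_mul R G a r).symm
    rw [this, hJmem] at h2
    exact h2
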